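/- Let f : X → Y be a map between Boolean metric spaces (X,d) and (Y,d') over a Boolean ring B. Then f is contractive if and only if for all x, x₁,…,xₙ ∈ X and all a₁,…,aₙ ∈ B with aᵢaⱼ = 0 for i ≠ j and a₁ + ⋯ + aₙ = 1: if x is the convex combination of x₁,…,xₙ with coefficients a₁,…,aₙ, then f(x) is the convex combination of f(x₁),…,f(xₙ) with coefficients a₁,…,aₙ. -/
import Mathlib


/-- The order on a Boolean ring: `a ≤ b` iff `a * b = a`. -/
def ble {B : Type} [BooleanRing B] (a b : B) : Prop := a * b = a

/-- The join on a Boolean ring: `a ∨ b = a + b + a * b`. -/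
def bjoin {B : Type} [BooleanRing B] (a b : B) : B := a + b + a * b

/-- A Boolean metric space over a Boolean ring `B`: `d x y = 0` iff `x = y`,
`d` is symmetric, and `d x z ≤ d x y ∨ d y z`. -/
structure BooleanMetric (B : Type) [BooleanRing B] (X : Type) where
  d : X → X → B
  d_eq_zero : ∀ x y, d x y = 0 ↔ x = y
  d_symm : ∀ x y, d x y = d y x
  d_tri : ∀ x y z, ble (d x z) (bjoin (d x y) (d y z))

/-- The coefficients `a i` have pairwise zero products. -/
def PairwiseOrthCoeffs {B : Type} [BooleanRing B] {k : ℕ} (a : Fin k → B) : Prop :=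
  ∀ i j, i ≠ j → a i * a j = 0

/-- `x` is a convex combination of `x₁, …, xₖ` with coefficients `a₁, …, aₖ`,
i.e. `aᵢ · d(x, xᵢ) = 0` for all `i`. -/
def IsConvComb {B X : Type} [BooleanRing B] (m : BooleanMetric B X) {k : ℕ}
    (a : Fin k → B) (xs : Fin k → X) (x : X) : Prop :=
  ∀ i, a i * m.d x (xs i) = 0

/-- A subset `S` is convex: every convex combination of points of `S` (with pairwise
disjoint coefficients summing to `1`) exists in `S`. -/
def IsConvexSubspace {B X : Type} [BooleanRing B] (m : BooleanMetric B X) (S : Set X) : Prop :=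
  ∀ (k : ℕ) (a : Fin k → B) (xs : Fin k → X), (∀ i, xs i ∈ S) →
    PairwiseOrthCoeffs a → (∑ i, a i) = 1 → ∃ x ∈ S, IsConvComb m a xs x

/-- A subset `S` is a CFG-space: it is convex and there are finitely many points of `S`
of which every point of `S` is a convex combination. -/
def IsCFGSubspace {B X : Type} [BooleanRing B] (m : BooleanMetric B X) (S : Set X) : Prop :=
  IsConvexSubspace m S ∧
  ∃ (k : ℕ) (xs : Fin k → X), (∀ i, xs i ∈ S) ∧
    ∀ x ∈ S, ∃ a : Fin k → B, PairwiseOrthCoeffs a ∧ (∑ i, a i) = 1 ∧ IsConvComb m a xs x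

/-- A contractive map: `d(f x, f y) ≤ d(x, y)`. -/
def Contractive {B X Y : Type} [BooleanRing B] (mX : BooleanMetric B X) (mY : BooleanMetric B Y)
    (f : X → Y) : Prop :=
  ∀ x y, ble (mY.d (f x) (f y)) (mX.d x y)

/-- `sm a x` is the convex combination `a x + (a+1) 0` of `x` and the base point `z`
with coefficients `a` and `a + 1`. -/
def IsScalarMul {B X : Type} [BooleanRing B] (m : BooleanMetric B X) (z : X)
    (sm : B → X → X) : Prop :=
  ∀ a x, a * m.d (sm a x) x = 0 ∧ (a + 1) * m.d (sm a x) z = 0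

/-- `x ⊥ y`, i.e. `x ⋆ y = (d(x,y)+1) x = 0`. -/
def Orth {B X : Type} [BooleanRing B] (m : BooleanMetric B X) (z : X) (sm : B → X → X)
    (x y : X) : Prop :=
  sm (m.d x y + 1) x = z

/-- `x` is the convex combination of `0, x₁, …, xₖ` with coefficients
`a₀ = 1 + a₁ + ⋯ + aₖ, a₁, …, aₖ`. -/
def ConvCombWithZero {B X : Type} [BooleanRing B] (m : BooleanMetric B X) (z : X) {k : ℕ}
    (a : Fin k → B) (xs : Fin k → X) (x : X) : Prop :=
  PairwiseOrthCoeffs a ∧ (∀ i, a i * m.d x (xs i) = 0) ∧ (1 + ∑ i, a i) * m.d x z = 0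

/-- `x₁, …, xₖ` is a referential of `(X, z)`: the `xᵢ` are nonzero, pairwise orthogonal,
and every point of `X` is a convex combination of `0, x₁, …, xₖ`. -/
def IsReferential {B X : Type} [BooleanRing B] (m : BooleanMetric B X) (z : X)
    (sm : B → X → X) {k : ℕ} (xs : Fin k → X) : Prop :=
  (∀ i, xs i ≠ z) ∧ (∀ i j, i ≠ j → Orth m z sm (xs i) (xs j)) ∧
  ∀ x : X, ∃ a : Fin k → B, ConvCombWithZero m z a xs x

/-- The whole space is a convex closure of the subset `S`: it is convex and every point
is a convex combination of points of `S`. -/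
def IsConvexClosure {B X : Type} [BooleanRing B] (m : BooleanMetric B X) (S : Set X) : Prop :=
  IsConvexSubspace m Set.univ ∧
  ∀ x : X, ∃ (k : ℕ) (a : Fin k → B) (xs : Fin k → X),
    (∀ i, xs i ∈ S) ∧ PairwiseOrthCoeffs a ∧ (∑ i, a i) = 1 ∧ IsConvComb m a xs x

/-- A finite set `R` is a referential of `(X, z)` (set version). -/
def IsReferentialSet {B X : Type} [BooleanRing B] (m : BooleanMetric B X) (z : X)
    (sm : B → X → X) (R : Finset X) : Prop :=
  z ∉ R ∧ (∀ x ∈ R, ∀ y ∈ R, x ≠ y → Orth m z sm x y) ∧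
  ∀ u : X, ∃ a : X → B,
    (∀ x ∈ R, ∀ y ∈ R, x ≠ y → a x * a y = 0) ∧
    (∀ x ∈ R, a x * m.d u x = 0) ∧ (1 + ∑ x ∈ R, a x) * m.d u z = 0

/-- A map between Boolean metric spaces is contractive iff it preserves convex
combinations. -/
theorem stmt5 {B X Y : Type} [BooleanRing B]
    (mX : BooleanMetric B X) (mY : BooleanMetric B Y) (f : X → Y) :
    Contractive mX mY f ↔
    ∀ (k : ℕ) (a : Fin k → B) (xs : Fin k → X) (x : X),
      PairwiseOrthCoeffs a → (∑ i, a i) = 1 →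
      IsConvComb mX a xs x → IsConvComb mY a (fun i => f (xs i)) (f x) := by
  constructor
  · intro hf k a xs x _ _ hc i
    have h1 := hf x (xs i)
    unfold ble at h1
    calc a i * mY.d (f x) (f (xs i))
        = a i * (mY.d (f x) (f (xs i)) * mX.d x (xs i)) := by rw [h1]
      _ = mY.d (f x) (f (xs i)) * (a i * mX.d x (xs i)) := by ring
      _ = 0 := by rw [hc i]; ring
  · intro h x y
    set dxy := mX.d x y with hd
    set dy := mY.d (f x) (f y) with hdy
    have horth : PairwiseOrthCoeffs ![dxy, dxy + 1] := by
      intro i j hij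
      fin_cases i <;> fin_cases j <;> simp_all <;>
        linear_combination BooleanRing.mul_self dxy + BooleanRing.add_self dxy
    have hsum : (∑ i, (![dxy, dxy + 1]) i) = 1 := by
      simp [Fin.sum_univ_two]
      linear_combination BooleanRing.add_self dxy
    have hcc : IsConvComb mX ![dxy, dxy + 1] ![x, y] x := by
      intro i
      fin_cases i <;> simp
      · rw [(mX.d_eq_zero x x).2 rfl]; ring
      · linear_combination BooleanRing.mul_self dxy + BooleanRing.add_self dxy
    have key := h 2 ![dxy, dxy + 1] ![x, y] x horth hsum hcc 1
    simp at key
    unfold ble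
    linear_combination key - BooleanRing.add_self dy
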